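/- Let E/K be a finite separable extension of fields of characteristic zero, and let G be a linear algebraic group over E. Then the Weil restriction of the derived group equals the derived group of the Weil restriction: Res_{E/K}(G') = (Res_{E/K} G)'. -/
import Mathlib

open scoped TensorProduct

def piUnitsEquiv {ι : Type*} {M : ι → Type*} [∀ i, Monoid (M i)] :
    (∀ i, M i)ˣ ≃* ∀ i, (M i)ˣ where
  toFun u i := ⟨u.val i, u.inv i, congrFun u.val_inv i, congrFun u.inv_val i⟩
  invFun u := ⟨fun i => (u i).val, fun i => (u i).inv,
    funext fun i => (u i).val_inv, funext fun i => (u i).inv_val⟩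
  left_inv u := by ext i; rfl
  right_inv u := by ext i; rfl
  map_mul' u v := by ext i; rfl

def matrixPiEquiv {ι : Type*} (n : Type*) [Fintype n] (R : ι → Type*)
    [∀ i, NonUnitalNonAssocSemiring (R i)] :
    Matrix n n (∀ i, R i) ≃+* ∀ i, Matrix n n (R i) where
  toFun M i := Matrix.of fun a b => M a b i
  invFun N := Matrix.of fun a b i => N i a b
  left_inv M := rfl
  right_inv N := rfl
  map_add' M N := rfl
  map_mul' M N := by
    funext i
    ext a b
    simp [Matrix.mul_apply, Finset.sum_apply]

theorem commutator_self_le {G : Type*} [Group G] (H : Subgroup G) : ⁅H, H⁆ ≤ H :=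
  Subgroup.commutator_le.mpr fun g hg h hh =>
    H.mul_mem (H.mul_mem (H.mul_mem hg hh) (H.inv_mem hg)) (H.inv_mem hh)

/-- For a finite (separable) extension `E/K` of fields of characteristic zero
and a linear algebraic group `G` over `E` (realized as a closed subgroup of `GL_m` cut out
by an ideal `I` of polynomial equations), the Weil restriction of the derived group equals
the derived group of the Weil restriction: `Res_{E/K}(G') = (Res_{E/K}G)'`. On points over
an algebraically closed field `Ω ⊇ K`, using `(Res_{E/K}G)(Ω) = G(Ω ⊗_K E)` and the
decomposition `Ω ⊗_K E ≅ ∏_σ Ω`, this says that the (abstract = algebraic, by char 0)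
derived subgroup of `G(Ω ⊗_K E)` corresponds to `∏_σ [G^σ(Ω), G^σ(Ω)] = Res(G')(Ω)`. -/
theorem stmt_18 (K E : Type) [Field K] [Field E] [CharZero K] [Algebra K E]
    [FiniteDimensional K E]
    (Ω : Type) [Field Ω] [IsAlgClosed Ω] [Algebra K Ω]
    (nE : ℕ) (hnE : nE = Module.finrank K E) (σ : Fin nE ≃ (E →ₐ[K] Ω))
    (e : (Ω ⊗[K] E) ≃ₐ[K] (Fin nE → Ω))
    (he : ∀ (ω : Ω) (x : E), e (ω ⊗ₜ[K] x) = fun i => ω * σ i x)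
    (m : ℕ) (I : Ideal (MvPolynomial (Fin m × Fin m) E))
    (GΩE : Subgroup (GL (Fin m) (Ω ⊗[K] E)))
    (hGΩE : ∀ x : GL (Fin m) (Ω ⊗[K] E), x ∈ GΩE ↔ ∀ f ∈ I,
      MvPolynomial.eval₂
        (Algebra.TensorProduct.includeRight : E →ₐ[K] Ω ⊗[K] E).toRingHom
        (fun ij => (x : Matrix (Fin m) (Fin m) (Ω ⊗[K] E)) ij.1 ij.2) f = 0)
    (Gσ : Fin nE → Subgroup (GL (Fin m) Ω))
    (hGσ : ∀ i, ∀ x : GL (Fin m) Ω, x ∈ Gσ i ↔ ∀ f ∈ I,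
      MvPolynomial.eval₂ (σ i).toRingHom
        (fun ij => (x : Matrix (Fin m) (Fin m) Ω) ij.1 ij.2) f = 0) :
    ∀ x : GL (Fin m) (Ω ⊗[K] E),
      x ∈ ⁅GΩE, GΩE⁆ ↔
      (x ∈ GΩE ∧ ∀ i : Fin nE,
        Units.map (((Pi.evalRingHom (fun _ : Fin nE => Ω) i).comp
            e.toAlgHom.toRingHom).mapMatrix.toMonoidHom) x ∈ ⁅Gσ i, Gσ i⁆) := by
  classical
  set k : Fin nE → ((Ω ⊗[K] E) →+* Ω) := fun i =>
    (Pi.evalRingHom (fun _ : Fin nE => Ω) i).comp e.toAlgHom.toRingHom with hk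
  set fi : Fin nE → (GL (Fin m) (Ω ⊗[K] E) →* GL (Fin m) Ω) := fun i =>
    Units.map ((k i).mapMatrix.toMonoidHom) with hfi
  let ρ : Matrix (Fin m) (Fin m) (Ω ⊗[K] E) ≃+* ∀ _ : Fin nE, Matrix (Fin m) (Fin m) Ω :=
    (RingEquiv.mapMatrix e.toRingEquiv).trans (matrixPiEquiv (Fin m) fun _ => Ω)
  let Φ : GL (Fin m) (Ω ⊗[K] E) ≃* ∀ _ : Fin nE, GL (Fin m) Ω :=
    (Units.mapEquiv ρ.toMulEquiv).trans piUnitsEquiv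
  have hΦ : ∀ (x : GL (Fin m) (Ω ⊗[K] E)) i, Φ x i = fi i x := by
    intro x i
    ext a b
    rfl
  have hzero : ∀ z : Ω ⊗[K] E, z = 0 ↔ ∀ i, k i z = 0 := by
    intro z
    constructor
    · rintro rfl i; simp
    · intro h
      have h2 : e z = 0 := funext fun i => h i
      have := e.injective (h2.trans (map_zero e).symm)
      simpa using this
  have hcomp : ∀ i, (k i).comp
      (Algebra.TensorProduct.includeRight : E →ₐ[K] Ω ⊗[K] E).toRingHom = (σ i).toRingHom := by
    intro i
    ext x
    show (e ((1:Ω) ⊗ₜ[K] x)) i = σ i x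
    rw [he]; simp
  have heval : ∀ i (x : GL (Fin m) (Ω ⊗[K] E)) f,
      MvPolynomial.eval₂ (σ i).toRingHom
        (fun ij : Fin m × Fin m => ((fi i x : GL (Fin m) Ω) : Matrix (Fin m) (Fin m) Ω) ij.1 ij.2) f
      = k i (MvPolynomial.eval₂
        (Algebra.TensorProduct.includeRight : E →ₐ[K] Ω ⊗[K] E).toRingHom
        (fun ij : Fin m × Fin m => (x : Matrix (Fin m) (Fin m) (Ω ⊗[K] E)) ij.1 ij.2) f) := by
    intro i x f
    rw [MvPolynomial.eval₂_comp_left (k i), hcomp]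
    rfl
  have hmem : ∀ x : GL (Fin m) (Ω ⊗[K] E), x ∈ GΩE ↔ ∀ i, fi i x ∈ Gσ i := by
    intro x
    rw [hGΩE]
    constructor
    · intro h i
      rw [hGσ]
      intro f hf
      rw [heval, h f hf, map_zero]
    · intro h f hf
      rw [hzero]
      intro i
      rw [← heval]
      exact (hGσ i _).mp (h i) f hf
  have hmem' : ∀ y : ∀ _ : Fin nE, GL (Fin m) Ω, Φ.symm y ∈ GΩE ↔ ∀ i, y i ∈ Gσ i := by
    intro y
    rw [hmem]
    refine forall_congr' fun i => ?_
    rw [← hΦ, MulEquiv.apply_symm_apply]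
  have hmap : Subgroup.map Φ.toMonoidHom GΩE = Subgroup.pi Set.univ Gσ := by
    ext y
    rw [Subgroup.mem_map_equiv, hmem', Subgroup.mem_pi]
    simp
  have hmapc : Subgroup.map Φ.toMonoidHom ⁅GΩE, GΩE⁆
      = Subgroup.pi Set.univ fun i => ⁅Gσ i, Gσ i⁆ := by
    rw [Subgroup.map_commutator, hmap, Subgroup.commutator_pi_pi_of_finite]
  intro x
  have hxc : x ∈ ⁅GΩE, GΩE⁆ ↔ ∀ i, fi i x ∈ ⁅Gσ i, Gσ i⁆ := by
    have hx : x ∈ ⁅GΩE, GΩE⁆ ↔ Φ x ∈ Subgroup.map Φ.toMonoidHom ⁅GΩE, GΩE⁆ := by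
      rw [Subgroup.mem_map_equiv, MulEquiv.symm_apply_apply]
    rw [hx, hmapc, Subgroup.mem_pi]
    constructor
    · intro h i
      rw [← hΦ]
      exact h i trivial
    · intro h i _
      rw [hΦ]
      exact h i
  rw [hxc]
  constructor
  · intro h
    refine ⟨(hmem x).mpr fun i => commutator_self_le _ (h i), h⟩
  · exact fun h => h.2
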